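/- arXiv:1303.4569 — 2 statements merged into one kernel-verified Lean document; each statement's English description precedes it below -/
import Mathlib

section
/- Let A be a C*-algebra with triple product {x,y,z} = (x y* z + z y* x)/2. For a, b in A the following are equivalent: (i) {a, b, x} = 0 for all x in A; (ii) a b* = 0 and b* a = 0; (iii) {a, a, b} = 0. -/
noncomputable def tp {A : Type*} [NonUnitalNormedRing A] [StarRing A] [NormedSpace ℂ A]
    (x y z : A) : A :=
  (2:ℂ)⁻¹ • (x * star y * z + z * star y * x)

section Helpers

open scoped ContinuousMapZero

lemma half_zero {A : Type*} [AddCommGroup A] [Module ℂ A] {y : A} (h : y + y = 0) : y = 0 := by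
  have h2 : (2:ℂ) • y = 0 := by rw [two_smul]; exact h
  rcases smul_eq_zero.mp h2 with h | h
  · norm_num at h
  · exact h

variable {A : Type*} [NonUnitalCStarAlgebra A]

open ContinuousMapZero in
lemma commute_cfcn_of_commute {q u : A} (h : q * u = u * q) (f : ℝ → ℝ) :
    cfcₙ f q * u = u * cfcₙ f q := by
  refine cfcₙ_cases (fun x => x * u = u * x) q f (by simp) fun hf hf0 hq' => ?_
  generalize (⟨⟨_, hf.restrict⟩, hf0⟩ : C(quasispectrum ℝ q, ℝ)₀) = g
  have h0 : ((0 : quasispectrum ℝ q) : ℝ) = 0 := rfl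
  have hid : ∀ h0' : ((0 : quasispectrum ℝ q) : ℝ) = 0,
      cfcₙHom hq' (ContinuousMapZero.id (quasispectrum ℝ q)) = q := fun _ => cfcₙHom_id hq'
  induction g using ContinuousMapZero.induction_on_of_compact with
  | zero => simp
  | id => rw [hid h0]; exact h
  | star_id => rw [star_trivial, hid h0]; exact h
  | add f g hf' hg' => rw [map_add, add_mul, mul_add, hf', hg']
  | mul f g hf' hg' => rw [map_mul, mul_assoc, hg', ← mul_assoc, hf', mul_assoc]
  | smul r f hf' => rw [map_smul, smul_mul_assoc, mul_smul_comm, hf']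
  | frequently f hf' =>
    have hc : IsClosed {g : C(quasispectrum ℝ q, ℝ)₀ |
        cfcₙHom hq' g * u = u * cfcₙHom hq' g} := by
      apply isClosed_eq
      · exact (continuous_mul_right u).comp (cfcₙHom_continuous hq')
      · exact (continuous_mul_left u).comp (cfcₙHom_continuous hq')
    exact hc.closure_subset (mem_closure_iff_frequently.mpr hf')

lemma sqrt_sq' {q : A} (hq : IsSelfAdjoint q) (hspec : quasispectrum ℝ q ⊆ Set.Ici 0) :
    cfcₙ Real.sqrt (q * q) = q := by
  have h1 : cfcₙ (fun t : ℝ => t * t) q = q * q := by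
    rw [cfcₙ_mul (fun t : ℝ => t) (fun t : ℝ => t) q, cfcₙ_id' ℝ q]
  rw [← h1, ← cfcₙ_comp Real.sqrt (fun t : ℝ => t * t) q (by fun_prop) (by simp)
    (by fun_prop) (by simp) hq]
  calc cfcₙ (Real.sqrt ∘ fun t : ℝ => t * t) q = cfcₙ (id : ℝ → ℝ) q := by
        apply cfcₙ_congr
        intro t ht
        simp only [Function.comp_apply, id_eq]
        rw [Real.sqrt_mul_self (hspec ht)]
    _ = q := cfcₙ_id ℝ q

lemma quasi_nonneg (a : A) : quasispectrum ℝ (star a * a) ⊆ Set.Ici 0 := by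
  intro x hx
  rw [Unitization.quasispectrum_eq_spectrum_inr' ℝ ℂ, Unitization.inr_mul,
    Unitization.inr_star] at hx
  exact spectrum_star_mul_self_nonneg x hx

end Helpers

theorem stmt12 {A : Type*} [NonUnitalNormedRing A] [StarRing A] [CStarRing A]
    [NormedSpace ℂ A] [IsScalarTower ℂ A A] [SMulCommClass ℂ A A] [StarModule ℂ A]
    [CompleteSpace A] (a b : A) :
    ((∀ x : A, tp a b x = 0) ↔ (a * star b = 0 ∧ star b * a = 0)) ∧
    ((∀ x : A, tp a b x = 0) ↔ tp a a b = 0) := by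
  letI : NonUnitalCStarAlgebra A :=
    { ‹NonUnitalNormedRing A›, ‹StarRing A›, ‹CStarRing A›, ‹NormedSpace ℂ A›,
      ‹IsScalarTower ℂ A A›, ‹SMulCommClass ℂ A A›, ‹StarModule ℂ A›,
      ‹CompleteSpace A› with }
  -- (i) → (ii)
  have key : (∀ x : A, tp a b x = 0) → (a * star b = 0 ∧ star b * a = 0) := by
    intro h
    have hcx : ∀ x : A, (a * star b) * x = -(x * (star b * a)) := by
      intro x
      have hx := h x
      simp only [tp, smul_eq_zero] at hx
      rcases hx with hx | hx
      · norm_num at hx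
      · rw [mul_assoc x (star b) a] at hx
        exact eq_neg_of_add_eq_zero_left hx
    have had : a * (star b * a) = 0 := by
      apply half_zero
      have h2 := hcx a
      rw [mul_assoc] at h2
      nth_rewrite 1 [h2]
      rw [neg_add_cancel]
    have hdd : (star b * a) * (star b * a) = 0 := by
      calc (star b * a) * (star b * a) = star b * (a * (star b * a)) := by
            simp only [mul_assoc]
        _ = 0 := by rw [had, mul_zero]
    -- X = C * star C with star C = b * star a
    have hE1 : (a * star b) * (b * star a) = -((b * star a) * (star b * a)) :=
      hcx (b * star a)
    have hE3 : (a * star b) * (b * star a) = -((star a * b) * (a * star b)) := by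
      have hh := congrArg star hE1
      simp only [star_neg, star_mul, star_star] at hh
      simpa only [mul_assoc] using hh
    have hXX : ((a * star b) * (b * star a)) * ((a * star b) * (b * star a)) = 0 := by
      nth_rewrite 1 [hE3]
      nth_rewrite 1 [hE1]
      rw [neg_mul_neg]
      calc ((star a * b) * (a * star b)) * ((b * star a) * (star b * a))
          = (star a * b) * (((a * star b) * (b * star a)) * (star b * a)) := by
            simp only [mul_assoc]
        _ = (star a * b) * ((-((b * star a) * (star b * a))) * (star b * a)) := by
            rw [hE1]
        _ = -((star a * b) * ((b * star a) * ((star b * a) * (star b * a)))) := by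
            simp only [neg_mul, mul_neg, mul_assoc]
        _ = 0 := by rw [hdd, mul_zero, mul_zero, neg_zero]
    have hXsa : star ((a * star b) * (b * star a)) = (a * star b) * (b * star a) := by
      simp only [star_mul, star_star, mul_assoc]
    have hX0 : (a * star b) * (b * star a) = 0 := by
      refine (CStarRing.star_mul_self_eq_zero_iff _).mp ?_
      rw [hXsa]
      exact hXX
    have hc0 : a * star b = 0 := by
      refine (CStarRing.mul_star_self_eq_zero_iff _).mp ?_
      rw [star_mul, star_star]
      exact hX0
    have hd0 : star b * a = 0 := by
      have h1 := hcx (star (star b * a))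
      rw [hc0, zero_mul] at h1
      exact (CStarRing.star_mul_self_eq_zero_iff _).mp (neg_eq_zero.mp h1.symm)
    exact ⟨hc0, hd0⟩
  -- (ii) → (i)
  have key' : (a * star b = 0 ∧ star b * a = 0) → ∀ x : A, tp a b x = 0 := by
    rintro ⟨h1, h2⟩ x
    simp only [tp]
    rw [mul_assoc x (star b) a, h1, h2, zero_mul, mul_zero, add_zero, smul_zero]
  -- (iii) → (ii)
  have key2 : tp a a b = 0 → (a * star b = 0 ∧ star b * a = 0) := by
    intro h3
    have h3' : (a * star a) * b + b * (star a * a) = 0 := by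
      simp only [tp, smul_eq_zero] at h3
      rcases h3 with h3 | h3
      · norm_num at h3
      · rwa [mul_assoc b (star a) a] at h3
    have hq_sa : IsSelfAdjoint (star a * a) := IsSelfAdjoint.star_mul_self a
    have hpb_eq : (a * star a) * b = -(b * (star a * a)) := eq_neg_of_add_eq_zero_left h3'
    have h4 : (star a * a) * (star a * b) = -((star a * b) * (star a * a)) := by
      calc (star a * a) * (star a * b) = star a * ((a * star a) * b) := by
            simp only [mul_assoc]
        _ = star a * (-(b * (star a * a))) := by rw [hpb_eq]
        _ = -((star a * b) * (star a * a)) := by simp only [mul_neg, neg_mul, mul_assoc]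
    have h5 : ((star a * a) * (star a * a)) * (star a * b)
        = (star a * b) * ((star a * a) * (star a * a)) := by
      calc ((star a * a) * (star a * a)) * (star a * b)
          = (star a * a) * ((star a * a) * (star a * b)) := by rw [mul_assoc]
        _ = (star a * a) * (-((star a * b) * (star a * a))) := by rw [h4]
        _ = -(((star a * a) * (star a * b)) * (star a * a)) := by
            simp only [mul_neg, neg_mul, mul_assoc]
        _ = (star a * b) * ((star a * a) * (star a * a)) := by
            rw [h4, neg_mul, neg_neg, mul_assoc]
    have hcomm := commute_cfcn_of_commute h5 Real.sqrt
    rw [sqrt_sq' hq_sa (quasi_nonneg a)] at hcomm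
    have hqu : (star a * a) * (star a * b) = 0 := by
      apply half_zero
      nth_rewrite 1 [h4]
      rw [hcomm, neg_add_cancel]
    have hppb : (a * star a) * ((a * star a) * b) = 0 := by
      calc (a * star a) * ((a * star a) * b) = a * ((star a * a) * (star a * b)) := by
            simp only [mul_assoc]
        _ = 0 := by rw [hqu, mul_zero]
    have hpb : (a * star a) * b = 0 := by
      refine (CStarRing.star_mul_self_eq_zero_iff _).mp ?_
      rw [star_mul, star_mul, star_star]
      calc (star b * (a * star a)) * ((a * star a) * b)
          = star b * ((a * star a) * ((a * star a) * b)) := by simp only [mul_assoc]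
        _ = 0 := by rw [hppb, mul_zero]
    have hbq : b * (star a * a) = 0 := by
      have h6 := h3'
      rw [hpb, zero_add] at h6
      exact h6
    have hd0 : star b * a = 0 := by
      refine (CStarRing.mul_star_self_eq_zero_iff _).mp ?_
      rw [star_mul, star_star]
      calc (star b * a) * (star a * b) = star b * ((a * star a) * b) := by
            simp only [mul_assoc]
        _ = 0 := by rw [hpb, mul_zero]
    have hc0 : a * star b = 0 := by
      have h9 : (b * star a) * star (b * star a) = 0 := by
        rw [star_mul, star_star]
        calc (b * star a) * (a * star b) = (b * (star a * a)) * star b := by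
              simp only [mul_assoc]
          _ = 0 := by rw [hbq, zero_mul]
      have hba : b * star a = 0 := (CStarRing.mul_star_self_eq_zero_iff _).mp h9
      calc a * star b = star (b * star a) := by rw [star_mul, star_star]
        _ = 0 := by rw [hba, star_zero]
    exact ⟨hc0, hd0⟩
  -- (i) → (iii)
  have forward : (∀ x : A, tp a b x = 0) → tp a a b = 0 := by
    intro h
    obtain ⟨hc0, hd0⟩ := key h
    have h1 : star a * b = 0 := by
      have := congrArg star hd0
      rwa [star_mul, star_star, star_zero] at this
    have h2 : b * star a = 0 := by
      have := congrArg star hc0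
      rwa [star_mul, star_star, star_zero] at this
    simp only [tp]
    rw [mul_assoc a (star a) b, h1, mul_zero, h2, zero_mul, add_zero, smul_zero]
  exact ⟨⟨key, key'⟩, ⟨forward, fun h3 => key' (key2 h3)⟩⟩
end

section
/- Let A be a C*-algebra with triple product {x,y,z} = (x y* z + z y* x)/2, let e be a partial isometry in A, and let δ : A → A be a triple derivation. Then P₀(e)(δ(e)) = 0 and P₂(e)(δ(e)) = -Q(e)(δ(e)), where Q(e)x = {e,x,e}, P₂(e) = Q(e)², and P₀(e) = Id - 2L(e,e) + Q(e)² with L(e,e)x = {e,e,x}. -/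
/-- Key algebraic lemma in a non-unital ring. -/
lemma aux_peirce {R : Type*} [NonUnitalRing R] (e f a b : R)
    (hef : e * f * e = e) (hfe : f * e * f = f)
    (hk : a = e * f * a + a * f * e + e * b * e) :
    e * f * a * f * e = -(e * b * e) := by
  have h6 : ∀ x : R, x * e * f * e = x * e := by
    intro x
    simp only [mul_assoc]
    rw [← mul_assoc e f e, hef]
  have eqn : e * f * a * f * e = e * f * a * f * e + e * f * a * f * e + e * b * e := by
    conv_lhs => rw [hk]
    simp only [mul_add, add_mul, ← mul_assoc, hef, h6]
  have h8 : e * f * a * f * e + (e * f * a * f * e + e * b * e)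
      = e * f * a * f * e + 0 := by
    rw [add_zero, ← add_assoc]; exact eqn.symm
  have h9 : e * f * a * f * e + e * b * e = 0 := add_left_cancel h8
  exact eq_neg_of_add_eq_zero_left h9

theorem stmt16 {A : Type*} [NonUnitalNormedRing A] [StarRing A] [CStarRing A]
    [NormedSpace ℂ A] [IsScalarTower ℂ A A] [SMulCommClass ℂ A A] [StarModule ℂ A]
    [CompleteSpace A] (δ : A →ₗ[ℂ] A) (hδ : ∀ x y z : A, δ (tp x y z) = tp (δ x) y z + tp x (δ y) z + tp x y (δ z))
    (e : A) (he : e * star e * e = e) :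
    (δ e - (2:ℂ) • tp e e (δ e) + tp e (tp e (δ e) e) e = 0) ∧
    (tp e (tp e (δ e) e) e = - tp e (δ e) e) := by
  have h0 : tp e e e = e := by
    unfold tp; rw [he]; module
  have h2 : star e * e * star e = star e := by
    simpa [star_mul, mul_assoc] using congrArg star he
  have h := hδ e e e
  rw [h0] at h
  -- h : δ e = tp (δ e) e e + tp e (δ e) e + tp e e (δ e)
  have h' := h
  unfold tp at h'
  have key2 : δ e = e * star e * (δ e) + (δ e) * star e * e + e * star (δ e) * e :=
    h'.trans (by module)
  have hq : tp e (δ e) e = e * star (δ e) * e := by unfold tp; module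
  have hstar : star (e * star (δ e) * e) = star e * ((δ e) * star e) := by
    simp [star_mul, mul_assoc]
  have g2 : tp e (tp e (δ e) e) e = - tp e (δ e) e := by
    rw [hq]
    have hq2 : tp e (e * star (δ e) * e) e = e * star (e * star (δ e) * e) * e := by
      unfold tp; module
    rw [hq2, hstar]
    have haux := aux_peirce e (star e) (δ e) (star (δ e)) he h2 key2
    simp only [mul_assoc] at haux ⊢
    exact haux
  have hsym : tp (δ e) e e = tp e e (δ e) := by
    unfold tp; rw [add_comm]
  have hsub : δ e - (2:ℂ) • tp e e (δ e) = tp e (δ e) e := by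
    nth_rewrite 1 [h]
    rw [hsym]
    module
  refine ⟨?_, g2⟩
  rw [hsub, g2]
  exact add_neg_cancel _
end
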